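/- Let φ = (φ_i)_{i≥1} be a sequence of real numbers with φ_i = 0 for all i ≥ K+1, where K is a positive integer, and let l > 1 be an integer. The following are equivalent: (1) for every n ≥ K+1, x = 0 is a zero of Be_n^φ of multiplicity at least l; (2) for some n ≥ K+1, x = 0 is a zero of Be_n^φ of multiplicity at least l; (3) there exist indices i_1, …, i_{l−1} (necessarily in {1,…,K}) such that φ_{i_j} = −j for j = 1, …, l−1. -/
import Mathlib


open Polynomial

/-- The Bell polynomials: `Bell 0 = 1`, `Bell (n+1) = x·(Bell n + (Bell n)')`. -/
noncomputable def Bell : ℕ → Polynomial ℝ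
  | 0 => 1
  | n + 1 => X * (Bell n + derivative (Bell n))

/-- `Phi φ n i` is the elementary symmetric polynomial of degree `i` in `φ 1, …, φ n`. -/
noncomputable def Phi (φ : ℕ → ℝ) (n i : ℕ) : ℝ :=
  ∑ s ∈ Finset.powersetCard i (Finset.Icc 1 n), ∏ j ∈ s, φ j

/-- The generalized Bell polynomial `Be_n^φ = ∑_{j=0}^n Φ^n_{n-j} Be_j`. -/
noncomputable def genBell (φ : ℕ → ℝ) (n : ℕ) : Polynomial ℝ :=
  ∑ j ∈ Finset.range (n + 1), C (Phi φ n (n - j)) * Bell j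

/-- The sequence `φ^{{l}}` obtained from `φ` by removing its `l`-th term
(sequences indexed from 1). -/
def removeIdx (φ : ℕ → ℝ) (l : ℕ) (i : ℕ) : ℝ := if i < l then φ i else φ (i + 1)

/-- The sequence `φ^{l,M}`, obtained by adding `M` to the `l`-th term of `φ`. -/
def addAt (φ : ℕ → ℝ) (l : ℕ) (M : ℝ) (i : ℕ) : ℝ := φ i + if i = l then M else 0

/-- A finite set `U` of reals interlaces a finite set `V` if between any two consecutive
elements of `U` there lies exactly one element of `V`, and either `|U| = |V| + 1`, or
`|U| = |V|` and `max U < max V`. -/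
def Interlaces (U V : Finset ℝ) : Prop :=
  (∀ u₁ ∈ U, ∀ u₂ ∈ U, u₁ < u₂ → (∀ u ∈ U, ¬(u₁ < u ∧ u < u₂)) →
    ∃! v, v ∈ V ∧ u₁ < v ∧ v < u₂) ∧
  (U.card = V.card + 1 ∨ (U.card = V.card ∧ U.max < V.max))

/-- `zeta φ n k` is the `k`-th zero (in increasing order, `k` counted from 1) of the
generalized Bell polynomial `Be_n^φ`. -/
noncomputable def zeta (φ : ℕ → ℝ) (n k : ℕ) : ℝ :=
  ((genBell φ n).roots.toFinset.sort (· ≤ ·)).getD (k - 1) 0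

lemma Phi_zero (φ : ℕ → ℝ) (n : ℕ) : Phi φ n 0 = 1 := by
  simp [Phi]

lemma Phi_of_gt (φ : ℕ → ℝ) {n i : ℕ} (h : n < i) : Phi φ n i = 0 := by
  rw [Phi, Finset.powersetCard_eq_empty.mpr, Finset.sum_empty]
  simpa [Nat.card_Icc] using h

lemma Phi_succ (φ : ℕ → ℝ) (n i : ℕ) :
    Phi φ (n + 1) (i + 1) = Phi φ n (i + 1) + φ (n + 1) * Phi φ n i := by
  have hnot : (n + 1) ∉ Finset.Icc 1 n := by simp
  rw [Phi, ← Finset.insert_Icc_right_eq_Icc_add_one (by omega), Finset.powersetCard_succ_insert hnot,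
    Finset.sum_union]
  · congr 1
    rw [Finset.sum_image, Phi, Finset.mul_sum]
    · refine Finset.sum_congr rfl fun s hs => ?_
      have hns : (n + 1) ∉ s := fun hmem => hnot
        ((Finset.mem_powersetCard.mp hs).1 hmem)
      rw [Finset.prod_insert hns]
    · intro s hs t ht hst
      have hns : (n + 1) ∉ s := fun hmem => hnot ((Finset.mem_powersetCard.mp hs).1 hmem)
      have hnt : (n + 1) ∉ t := fun hmem => hnot ((Finset.mem_powersetCard.mp ht).1 hmem)
      have := congrArg (fun u => Finset.erase u (n + 1)) hst
      simpa [Finset.erase_insert, hns, hnt] using this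
  · rw [Finset.disjoint_left]
    intro s hs hs'
    obtain ⟨t, ht, rfl⟩ := Finset.mem_image.mp hs'
    exact hnot ((Finset.mem_powersetCard.mp hs).1 (Finset.mem_insert_self _ _))

lemma genBell_rev (φ : ℕ → ℝ) (n : ℕ) :
    genBell φ n = ∑ i ∈ Finset.range (n + 1), C (Phi φ n i) * Bell (n - i) := by
  rw [genBell,
    ← Finset.sum_range_reflect (fun i => C (Phi φ n i) * Bell (n - i)) (n + 1)]
  refine Finset.sum_congr rfl fun j hj => ?_
  have hj' : j ≤ n := Nat.lt_succ_iff.mp (Finset.mem_range.mp hj)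
  have h1 : n + 1 - 1 - j = n - j := by omega
  have h2 : n - (n - j) = j := by omega
  simp only [h1, h2]

lemma genBell_succ (φ : ℕ → ℝ) (n : ℕ) :
    genBell φ (n + 1) =
      X * (genBell φ n + derivative (genBell φ n)) + C (φ (n + 1)) * genBell φ n := by
  have hB : genBell φ n = ∑ i ∈ Finset.range (n + 1), C (Phi φ n i) * Bell (n - i) :=
    genBell_rev φ n
  have hX : X * (genBell φ n + derivative (genBell φ n)) =
      ∑ i ∈ Finset.range (n + 1), C (Phi φ n i) * Bell (n + 1 - i) := by
    rw [hB, derivative_sum, ← Finset.sum_add_distrib, Finset.mul_sum]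
    refine Finset.sum_congr rfl fun i hi => ?_
    have hi' : i ≤ n := Nat.lt_succ_iff.mp (Finset.mem_range.mp hi)
    have h1 : n + 1 - i = (n - i) + 1 := by omega
    rw [derivative_C_mul, h1,
      show Bell (n - i + 1) = X * (Bell (n - i) + derivative (Bell (n - i))) from rfl]
    ring
  rw [genBell_rev φ (n + 1),
    Finset.sum_range_succ' (fun i => C (Phi φ (n + 1) i) * Bell (n + 1 - i)) (n + 1), hX]
  have hsplit : ∀ i, C (Phi φ (n + 1) (i + 1)) * Bell (n + 1 - (i + 1)) =
      C (Phi φ n (i + 1)) * Bell (n - i) + C (φ (n + 1)) * (C (Phi φ n i) * Bell (n - i)) := by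
    intro i
    rw [Phi_succ, Nat.succ_sub_succ_eq_sub, C_add, C_mul]
    ring
  simp only [hsplit]
  rw [Finset.sum_add_distrib, ← Finset.mul_sum, ← hB]
  have h0 : Phi φ (n + 1) 0 = Phi φ n 0 := by rw [Phi_zero, Phi_zero]
  rw [h0]
  have hlast : ∑ i ∈ Finset.range (n + 1), C (Phi φ n i) * Bell (n + 1 - i)
      = (∑ i ∈ Finset.range (n + 1), C (Phi φ n (i + 1)) * Bell (n - i))
        + C (Phi φ n 0) * Bell (n + 1 - 0) := by
    rw [Finset.sum_range_succ' (fun i => C (Phi φ n i) * Bell (n + 1 - i)) n,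
      Finset.sum_range_succ (fun i => C (Phi φ n (i + 1)) * Bell (n - i)) n,
      Phi_of_gt φ (Nat.lt_succ_self n), map_zero, zero_mul, add_zero]
    refine congrArg₂ _ (Finset.sum_congr rfl fun i hi => ?_) rfl
    have hi' : i < n := Finset.mem_range.mp hi
    have : n + 1 - (i + 1) = n - i := by omega
    rw [this]
  rw [hlast]
  ring

/-- auxiliary coefficient sums -/
noncomputable def Fc (φ : ℕ → ℝ) (n m : ℕ) : ℝ :=
  ∑ r ∈ Finset.range (m + 1),
    (-1 : ℝ) ^ r * ((m.choose r : ℕ) : ℝ) * ∏ i ∈ Finset.Icc 1 n, ((r : ℝ) + φ i)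

lemma Fc_zero (φ : ℕ → ℝ) (m : ℕ) : Fc φ 0 m = if m = 0 then 1 else 0 := by
  have h := Int.alternating_sum_range_choose (n := m)
  have h' := congrArg (fun z : ℤ => (z : ℝ)) h
  push_cast at h'
  simpa [Fc] using h'

lemma choose_key (m r : ℕ) :
    (r : ℝ) * (((m + 1).choose r : ℕ) : ℝ) =
      ((m : ℝ) + 1) * ((((m + 1).choose r : ℕ) : ℝ) - ((m.choose r : ℕ) : ℝ)) := by
  rcases r with _ | s
  · simp
  · have h1 : (m + 1).choose (s + 1) = m.choose s + m.choose (s + 1) :=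
      Nat.choose_succ_succ m s
    have h2 : (m + 1) * m.choose s = (m + 1).choose (s + 1) * (s + 1) :=
      Nat.add_one_mul_choose_eq m s
    have h2' : ((m : ℝ) + 1) * (m.choose s : ℝ) =
        (((m + 1).choose (s + 1) : ℕ) : ℝ) * ((s : ℝ) + 1) := by
      exact_mod_cast congrArg (fun z : ℕ => (z : ℝ)) h2
    have h1' : (((m + 1).choose (s + 1) : ℕ) : ℝ) =
        ((m.choose s : ℕ) : ℝ) + ((m.choose (s + 1) : ℕ) : ℝ) := by
      exact_mod_cast congrArg (fun z : ℕ => (z : ℝ)) h1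
    rw [h1'] at h2' ⊢
    push_cast
    linear_combination -h2'

lemma Fc_succ (φ : ℕ → ℝ) (n m : ℕ) :
    Fc φ (n + 1) (m + 1) =
      -((m : ℝ) + 1) * Fc φ n m + ((m : ℝ) + 1 + φ (n + 1)) * Fc φ n (m + 1) := by
  have hprod : ∀ r : ℕ, ∏ i ∈ Finset.Icc 1 (n + 1), ((r : ℝ) + φ i)
      = (∏ i ∈ Finset.Icc 1 n, ((r : ℝ) + φ i)) * ((r : ℝ) + φ (n + 1)) :=
    fun r => Finset.prod_Icc_succ_top (by omega) _
  have hFm : Fc φ n m = ∑ r ∈ Finset.range (m + 2),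
      (-1 : ℝ) ^ r * ((m.choose r : ℕ) : ℝ) * ∏ i ∈ Finset.Icc 1 n, ((r : ℝ) + φ i) := by
    rw [Fc, Finset.sum_range_succ
      (fun r => (-1 : ℝ) ^ r * ((m.choose r : ℕ) : ℝ) * ∏ i ∈ Finset.Icc 1 n, ((r : ℝ) + φ i))
      (m + 1), Nat.choose_succ_self, Nat.cast_zero, mul_zero, zero_mul, add_zero]
  rw [Fc, hFm, Fc, Finset.mul_sum, Finset.mul_sum, ← Finset.sum_add_distrib]
  refine Finset.sum_congr rfl fun r hr => ?_
  rw [hprod r]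
  have key := choose_key m r
  linear_combination ((-1 : ℝ) ^ r * ∏ i ∈ Finset.Icc 1 n, ((r : ℝ) + φ i)) * key

lemma coeff_genBell (φ : ℕ → ℝ) (n : ℕ) :
    ∀ m, (m.factorial : ℝ) * (genBell φ n).coeff m = (-1 : ℝ) ^ m * Fc φ n m := by
  induction n with
  | zero =>
    intro m
    have h0 : genBell φ 0 = 1 := by
      simp [genBell, Phi_zero, Bell]
    rw [h0, Fc_zero, coeff_one]
    rcases eq_or_ne m 0 with rfl | hm
    · simp
    · simp [hm]
  | succ n ih =>
    intro m
    rw [genBell_succ]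
    rcases m with _ | m
    · rw [coeff_add, coeff_C_mul, mul_coeff_zero, coeff_X_zero, zero_mul, zero_add]
      have h1 := ih 0
      have hF : Fc φ (n + 1) 0 = Fc φ n 0 * φ (n + 1) := by
        simp only [Fc, zero_add, Finset.sum_range_one, Nat.choose_self, pow_zero,
          Nat.cast_one, Nat.cast_zero, one_mul]
        rw [Finset.prod_Icc_succ_top (Nat.le_add_left 1 n)]
      rw [hF]
      simp only [Nat.factorial_zero, Nat.cast_one, one_mul, pow_zero] at h1 ⊢
      rw [← h1]; ring
    · rw [coeff_add, coeff_C_mul, coeff_X_mul, coeff_add, coeff_derivative]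
      have h1 := ih m
      have h2 := ih (m + 1)
      have hfac : (((m + 1).factorial : ℕ) : ℝ) = ((m : ℝ) + 1) * (m.factorial : ℝ) := by
        rw [Nat.factorial_succ]; push_cast; ring
      rw [Fc_succ, hfac, pow_succ]
      rw [hfac, pow_succ] at h2
      linear_combination ((m : ℝ) + 1) * h1 + (((m : ℝ) + 1) + φ (n + 1)) * h2

lemma coeff_genBell_eq_zero_iff (φ : ℕ → ℝ) (n m : ℕ) :
    (genBell φ n).coeff m = 0 ↔ Fc φ n m = 0 := by
  have h := coeff_genBell φ n m
  have hf : (m.factorial : ℝ) ≠ 0 := by positivity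
  have hs : (-1 : ℝ) ^ m ≠ 0 := by positivity
  constructor
  · intro h0; rw [h0, mul_zero] at h
    exact (mul_eq_zero.mp h.symm).resolve_left hs
  · intro h0; rw [h0, mul_zero] at h
    exact (mul_eq_zero.mp h).resolve_left hf

lemma Bell_monic (n : ℕ) : (Bell n).Monic ∧ (Bell n).natDegree = n := by
  induction n with
  | zero => exact ⟨monic_one, natDegree_one⟩
  | succ n ih =>
    obtain ⟨hm, hd⟩ := ih
    have hne : Bell n ≠ 0 := hm.ne_zero
    have hsum : (Bell n + derivative (Bell n)).Monic := by
      refine hm.add_of_left ?_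
      exact lt_of_lt_of_le (degree_derivative_lt hne) le_rfl
    have hdsum : (Bell n + derivative (Bell n)).natDegree = n := by
      rw [natDegree_eq_of_degree_eq
        (degree_add_eq_left_of_degree_lt (degree_derivative_lt hne)), hd]
    constructor
    · show (Bell (n+1)).Monic
      rw [Bell]
      exact monic_X.mul hsum
    · show (Bell (n+1)).natDegree = n + 1
      rw [Bell, natDegree_mul X_ne_zero hsum.ne_zero, natDegree_X, hdsum]
      omega

lemma genBell_coeff_self (φ : ℕ → ℝ) (n : ℕ) : (genBell φ n).coeff n = 1 := by
  rw [genBell, finset_sum_coeff]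
  rw [Finset.sum_eq_single_of_mem n (Finset.self_mem_range_succ n)]
  · rw [coeff_C_mul, Nat.sub_self, Phi_zero]
    have h := (Bell_monic n).1.coeff_natDegree
    rw [(Bell_monic n).2] at h
    rw [h, one_mul]
  · intro j hj hjn
    have hj' : j < n := by
      have := Finset.mem_range.mp hj; omega
    rw [coeff_C_mul, coeff_eq_zero_of_natDegree_lt, mul_zero]
    rw [(Bell_monic j).2]; exact hj'

lemma genBell_ne_zero (φ : ℕ → ℝ) (n : ℕ) : genBell φ n ≠ 0 := by
  intro h
  have := genBell_coeff_self φ n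
  rw [h] at this
  simp at this

lemma mult_iff (φ : ℕ → ℝ) (n l : ℕ) :
    l ≤ (genBell φ n).rootMultiplicity 0 ↔ ∀ m < l, Fc φ n m = 0 := by
  rw [le_rootMultiplicity_iff (genBell_ne_zero φ n)]
  rw [map_zero, sub_zero, X_pow_dvd_iff]
  exact forall₂_congr fun m _ => coeff_genBell_eq_zero_iff φ n m

lemma prod_split (φ : ℕ → ℝ) (K : ℕ) (hφ : ∀ i, K + 1 ≤ i → φ i = 0) (r : ℝ) :
    ∀ n, K ≤ n → ∏ i ∈ Finset.Icc 1 n, (r + φ i) =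
      (∏ i ∈ Finset.Icc 1 K, (r + φ i)) * r ^ (n - K) := by
  intro n hn
  induction n, hn using Nat.le_induction with
  | base => simp
  | succ n hn ih =>
    rw [Finset.prod_Icc_succ_top (by omega), ih, hφ (n + 1) (by omega)]
    have : n + 1 - K = (n - K) + 1 := by omega
    rw [this, pow_succ]
    ring


/-- let `φ_i = 0` for `i ≥ K+1` and `l > 1`. The following are equivalent:
(1) for every `n ≥ K+1`, `x = 0` is a zero of `Be_n^φ` of multiplicity at least `l`;
(2) for some `n ≥ K+1`, `x = 0` is a zero of `Be_n^φ` of multiplicity at least `l`;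
(3) there are indices `i_1, …, i_{l−1}` with `φ_{i_j} = −j` for `j = 1, …, l−1`. -/
theorem genBell_multiplicity_zero_tfae (K : ℕ) (hK : 1 ≤ K) (φ : ℕ → ℝ)
    (hφ : ∀ i, K + 1 ≤ i → φ i = 0) (l : ℕ) (hl : 1 < l) :
    ((∀ n, K + 1 ≤ n → l ≤ (genBell φ n).rootMultiplicity 0) ↔
      (∃ n, K + 1 ≤ n ∧ l ≤ (genBell φ n).rootMultiplicity 0)) ∧
    ((∃ n, K + 1 ≤ n ∧ l ≤ (genBell φ n).rootMultiplicity 0) ↔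
      (∃ idx : ℕ → ℕ, ∀ j, 1 ≤ j → j ≤ l - 1 →
        1 ≤ idx j ∧ idx j ≤ K ∧ φ (idx j) = -(j : ℝ))) := by
  classical
  -- (3') → (1)
  have h31 : (∀ r : ℕ, 1 ≤ r → r ≤ l - 1 → ∏ i ∈ Finset.Icc 1 K, ((r : ℝ) + φ i) = 0) →
      ∀ n, K + 1 ≤ n → l ≤ (genBell φ n).rootMultiplicity 0 := by
    intro h3 n hn
    rw [mult_iff]
    intro m hm
    rw [Fc]
    refine Finset.sum_eq_zero fun r hr => ?_
    rw [prod_split φ K hφ _ n (by omega)]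
    rcases Nat.eq_zero_or_pos r with h0 | h1
    · subst h0
      rw [Nat.cast_zero, zero_pow (by omega : n - K ≠ 0), mul_zero, mul_zero]
    · rw [h3 r h1 (by have := Finset.mem_range.mp hr; omega), zero_mul, mul_zero]
  -- (2) → (3')
  have h23 : (∃ n, K + 1 ≤ n ∧ l ≤ (genBell φ n).rootMultiplicity 0) →
      ∀ r : ℕ, 1 ≤ r → r ≤ l - 1 → ∏ i ∈ Finset.Icc 1 K, ((r : ℝ) + φ i) = 0 := by
    rintro ⟨n, hn, hmult⟩
    rw [mult_iff] at hmult
    intro r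
    induction r using Nat.strong_induction_on with
    | _ r ih =>
      intro hr1 hr2
      have hFc : Fc φ n r = 0 := hmult r (by omega)
      rw [Fc] at hFc
      rw [Finset.sum_eq_single_of_mem r (Finset.self_mem_range_succ r)] at hFc
      · rw [Nat.choose_self, prod_split φ K hφ _ n (by omega)] at hFc
        have h1' : (0 : ℝ) < (r : ℝ) := by exact_mod_cast hr1
        rcases mul_eq_zero.mp hFc with h | h
        · exfalso
          rcases mul_eq_zero.mp h with h' | h'
          · exact absurd h' (pow_ne_zero _ (by norm_num))
          · norm_num at h'
        · exact (mul_eq_zero.mp h).resolve_right (pow_ne_zero _ (ne_of_gt h1'))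
      · intro s hs hsr
        rw [prod_split φ K hφ _ n (by omega)]
        rcases Nat.eq_zero_or_pos s with h0 | h1
        · subst h0
          rw [Nat.cast_zero, zero_pow (by omega : n - K ≠ 0), mul_zero, mul_zero]
        · rw [ih s (by have := Finset.mem_range.mp hs; omega) h1
            (by have := Finset.mem_range.mp hs; omega), zero_mul, mul_zero]
  refine ⟨⟨fun h1 => ⟨K + 1, le_rfl, h1 _ le_rfl⟩, fun h2 => h31 (h23 h2)⟩, ?_, ?_⟩
  · intro h2
    have h3 := h23 h2
    refine ⟨fun j => if h : ∃ i, 1 ≤ i ∧ i ≤ K ∧ φ i = -(j : ℝ) then h.choose else 1,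
      fun j hj1 hj2 => ?_⟩
    simp only []
    obtain ⟨i, hi, hi0⟩ := Finset.prod_eq_zero_iff.mp (h3 j hj1 hj2)
    have hmem := Finset.mem_Icc.mp hi
    have hex : ∃ i, 1 ≤ i ∧ i ≤ K ∧ φ i = -(j : ℝ) :=
      ⟨i, hmem.1, hmem.2, by linarith⟩
    rw [dif_pos hex]
    exact hex.choose_spec
  · rintro ⟨idx, hidx⟩
    refine ⟨K + 1, le_rfl, h31 (fun r hr1 hr2 => ?_) (K + 1) le_rfl⟩
    obtain ⟨h1, h2, h3⟩ := hidx r hr1 hr2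
    exact Finset.prod_eq_zero (Finset.mem_Icc.mpr ⟨h1, h2⟩) (by rw [h3]; ring)
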